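/- For all distinct points x, y ∈ B²∖{0}, w_{B²}(x,y) > low(x,y), where low(x,y) = |x−y| / min{|x−y*|, |x*−y|} with x* = x/|x|², y* = y/|y|². -/

import Mathlib

open Metric Set

/-- `x̃ = x(2−|x|)/|x|`. -/
noncomputable def tilde (x : ℂ) : ℂ := (((2 - ‖x‖) / ‖x‖ : ℝ) : ℂ) * x

/-- The quasi-metric `w` of the unit disk (on nonzero points). -/
noncomputable def wB (x y : ℂ) : ℝ :=
  ‖x - y‖ / min (‖x - tilde y‖) (‖y - tilde x‖)

/-- The low-function `low(x,y) = |x−y| / min{|x−y*|, |x*−y|}` with `x* = x/|x|²`. -/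
noncomputable def lowB (x y : ℂ) : ℝ :=
  ‖x - y‖ /
    min (‖x - y / ((‖y‖ : ℂ) ^ 2)‖)
        (‖x / ((‖x‖ : ℂ) ^ 2) - y‖)

lemma dist_mono (x y : ℂ) {s t : ℝ} (hst : s < t)
    (h1 : 1 < s * ‖y‖) (hx : ‖x‖ < 1) :
    ‖x - (s : ℂ) * y‖ < ‖x - (t : ℂ) * y‖ := by
  have hy : 0 < ‖y‖ := by
    rcases eq_or_ne y 0 with h | h
    · simp [h] at h1; nlinarith
    · exact norm_pos_iff.mpr h
  have hR : x.re * y.re + x.im * y.im ≤ ‖x‖ * ‖y‖ := by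
    have h1 : x.re * y.re + x.im * y.im = (x * (starRingEnd ℂ) y).re := by
      simp [Complex.mul_re]
    have h2 : |(x * (starRingEnd ℂ) y).re| ≤ ‖x * (starRingEnd ℂ) y‖ :=
      Complex.abs_re_le_norm _
    have h3 : ‖x * (starRingEnd ℂ) y‖ = ‖x‖ * ‖y‖ := by simp
    rw [h1]
    exact le_trans (le_abs_self _) (h3 ▸ h2)
  have hR' : x.re * y.re + x.im * y.im < ‖y‖ :=
    lt_of_le_of_lt hR (by nlinarith)
  have hNy' : y.re * y.re + y.im * y.im = ‖y‖ * ‖y‖ := by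
    rw [← Complex.normSq_apply, Complex.normSq_eq_norm_sq]; ring
  have hsb : ‖y‖ < s * (‖y‖ * ‖y‖) := by nlinarith
  have htb : ‖y‖ < t * (‖y‖ * ‖y‖) := by nlinarith
  have hkey : 0 < (t - s) *
      ((t + s) * (y.re * y.re + y.im * y.im) - 2 * (x.re * y.re + x.im * y.im)) := by
    apply mul_pos (by linarith)
    rw [hNy']
    nlinarith
  have hsq : ‖x - (s : ℂ) * y‖ ^ 2 < ‖x - (t : ℂ) * y‖ ^ 2 := by
    rw [Complex.sq_norm, Complex.sq_norm]
    simp only [Complex.normSq_apply, Complex.sub_re, Complex.sub_im, Complex.mul_re,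
      Complex.mul_im, Complex.ofReal_re, Complex.ofReal_im]
    nlinarith [hkey]
  exact lt_of_pow_lt_pow_left₀ 2 (norm_nonneg _) hsq

/-- For all distinct `x, y ∈ B² ∖ {0}`, `w_{B²}(x,y) > low(x,y)`. -/
theorem w_gt_low (x y : ℂ)
    (hx : x ∈ Metric.ball (0 : ℂ) 1) (hx0 : x ≠ 0)
    (hy : y ∈ Metric.ball (0 : ℂ) 1) (hy0 : y ≠ 0) (hxy : x ≠ y) :
    lowB x y < wB x y := by
  have hax : ‖x‖ < 1 := by simpa [Complex.dist_eq] using hx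
  have hay : ‖y‖ < 1 := by simpa [Complex.dist_eq] using hy
  have hax0 : 0 < ‖x‖ := norm_pos_iff.mpr hx0
  have hay0 : 0 < ‖y‖ := norm_pos_iff.mpr hy0
  have hystar : y / (((‖y‖ : ℝ) : ℂ) ^ 2) = ((1 / ‖y‖ ^ 2 : ℝ) : ℂ) * y := by
    push_cast
    field_simp
  have hxstar : x / (((‖x‖ : ℝ) : ℂ) ^ 2) = ((1 / ‖x‖ ^ 2 : ℝ) : ℂ) * x := by
    push_cast
    field_simp
  -- first comparison: |x - ỹ| < |x - y*|
  have h1 : ‖x - tilde y‖ <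
      ‖x - y / (((‖y‖ : ℝ) : ℂ) ^ 2)‖ := by
    rw [hystar, tilde]
    refine dist_mono x y ?_ ?_ hax
    · rw [div_lt_div_iff₀ hay0 (by positivity)]
      have h : 0 < ‖y‖ * (1 - ‖y‖) ^ 2 :=
        mul_pos hay0 (pow_pos (by linarith) 2)
      nlinarith [h]
    · rw [div_mul_cancel₀ _ (ne_of_gt hay0)]
      linarith
  -- second comparison: |y - x̃| < |x* - y|
  have h2 : ‖y - tilde x‖ <
      ‖x / (((‖x‖ : ℝ) : ℂ) ^ 2) - y‖ := by
    rw [norm_sub_rev (x / (((‖x‖ : ℝ) : ℂ) ^ 2)) y, hxstar, tilde]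
    refine dist_mono y x ?_ ?_ hay
    · rw [div_lt_div_iff₀ hax0 (by positivity)]
      have h : 0 < ‖x‖ * (1 - ‖x‖) ^ 2 :=
        mul_pos hax0 (pow_pos (by linarith) 2)
      nlinarith [h]
    · rw [div_mul_cancel₀ _ (ne_of_gt hax0)]
      linarith
  -- positivity of the w-denominator
  have hd1 : 0 < ‖x - tilde y‖ := by
    rw [norm_pos_iff, sub_ne_zero]
    intro h
    have : ‖tilde y‖ = (2 - ‖y‖) / ‖y‖ * ‖y‖ := by
      rw [tilde, norm_mul, Complex.norm_real, Real.norm_eq_abs, abs_of_pos (div_pos (by linarith) hay0)]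
    rw [div_mul_cancel₀ _ (ne_of_gt hay0)] at this
    rw [h, this] at hax
    linarith
  have hd2 : 0 < ‖y - tilde x‖ := by
    rw [norm_pos_iff, sub_ne_zero]
    intro h
    have : ‖tilde x‖ = (2 - ‖x‖) / ‖x‖ * ‖x‖ := by
      rw [tilde, norm_mul, Complex.norm_real, Real.norm_eq_abs, abs_of_pos (div_pos (by linarith) hax0)]
    rw [div_mul_cancel₀ _ (ne_of_gt hax0)] at this
    rw [h, this] at hay
    linarith
  have hnum : 0 < ‖x - y‖ := norm_pos_iff.mpr (sub_ne_zero.mpr hxy)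
  have hmin : min (‖x - tilde y‖) (‖y - tilde x‖) <
      min (‖x - y / (((‖y‖ : ℝ) : ℂ) ^ 2)‖)
          (‖x / (((‖x‖ : ℝ) : ℂ) ^ 2) - y‖) :=
    lt_min (lt_of_le_of_lt (min_le_left _ _) h1) (lt_of_le_of_lt (min_le_right _ _) h2)
  exact div_lt_div_of_pos_left hnum (lt_min hd1 hd2) hmin
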